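/- Let a > 0, t0 = (a+1)/a, θ̃ = (a+1)^2/(a^2+3a+1), τ̃ = a(a+1)/(a^2+3a+1), and let φ ∈ C([−1,0]) satisfy φ(t) < 0 on [−1,−θ̃), φ(−θ̃) = 0, φ(t) > 0 on (−θ̃,−τ̃), φ(−τ̃) = 0, φ(t) < 0 on (−τ̃,0), and φ(0) = 0. If x : [−1,∞) → ℝ is a solution of the relay equation ẋ(t) = R(x(t−1)) with initial function φ, then x(t) = y0(t) for all t ≥ 0, where y0 is the θ̃-periodic function with y0(t) = t on [0, 1−θ̃], y0(t) = −a(t − (1−θ̃)t0) on [1−θ̃, 1−τ̃], y0(t) = t − θ̃ on [1−τ̃, θ̃]. -/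

import Mathlib

/-- The relay nonlinearity: `R a x = 1` if `x ≤ 0`, and `R a x = -a` if `x > 0`. -/
noncomputable def R (a x : ℝ) : ℝ := if x ≤ 0 then 1 else -a

/-- `x : [-1,∞) → ℝ` is a solution of the relay equation `x'(t) = R a (x (t-1))`
with initial function `φ ∈ C([-1,0])`: `x` is continuous on `[-1,∞)`, coincides
with `φ` on `[-1,0]`, and for every `t > 0` outside an exceptional set having
finitely many points in each bounded interval, `x` is differentiable at `t` with
`x'(t) = R a (x (t-1))`. -/
def IsSolution (a : ℝ) (φ x : ℝ → ℝ) : Prop :=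
  ContinuousOn x (Set.Ici (-1 : ℝ)) ∧
  (∀ t ∈ Set.Icc (-1 : ℝ) 0, x t = φ t) ∧
  ∃ S : Set ℝ, (∀ A B : ℝ, (S ∩ Set.Icc A B).Finite) ∧
    ∀ t : ℝ, 0 < t → t ∉ S → HasDerivAt x (R a (x (t - 1))) t

open Set in
lemma affine_aux (c : ℝ) {F : Set ℝ} (hF : F.Finite) :
    ∀ (f : ℝ → ℝ) (A B : ℝ), A ≤ B → ContinuousOn f (Set.Icc A B) →
      (∀ t ∈ Set.Ioo A B, t ∉ F → HasDerivAt f c t) →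
      ∀ t ∈ Set.Icc A B, f t = f A + c * (t - A) := by
  induction F, hF using Set.Finite.induction_on with
  | empty =>
    intro f A B hAB hf hd t ht
    have h := intervalIntegral.integral_eq_sub_of_hasDeriv_right_of_le ht.1
      (hf.mono (Icc_subset_Icc le_rfl ht.2))
      (fun u hu => ((hd u ⟨hu.1, hu.2.trans_le ht.2⟩ (Set.notMem_empty u)).hasDerivWithinAt))
      (intervalIntegrable_const (c := c))
    simp only [intervalIntegral.integral_const, smul_eq_mul] at h
    linarith
  | insert hpF hFfin ih =>
    rename_i p F'
    intro f A B hAB hf hd t ht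
    by_cases hp : p ∈ Set.Ioo A B
    · have h1 := ih f A p hp.1.le (hf.mono (Icc_subset_Icc le_rfl hp.2.le))
        (fun u hu huF => hd u ⟨hu.1, hu.2.trans hp.2⟩
          (by simp only [Set.mem_insert_iff]; push_neg; exact ⟨ne_of_lt hu.2, huF⟩))
      have h2 := ih f p B hp.2.le (hf.mono (Icc_subset_Icc hp.1.le le_rfl))
        (fun u hu huF => hd u ⟨hp.1.trans hu.1, hu.2⟩
          (by simp only [Set.mem_insert_iff]; push_neg; exact ⟨(ne_of_lt hu.1).symm, huF⟩))
      by_cases htp : t ≤ p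
      · exact h1 t ⟨ht.1, htp⟩
      · have e2 := h2 t ⟨(not_le.1 htp).le, ht.2⟩
        have e1 := h1 p ⟨hp.1.le, le_rfl⟩
        rw [e2, e1]; ring
    · refine ih f A B hAB hf (fun u hu huF => hd u hu ?_) t ht
      simp only [Set.mem_insert_iff]; push_neg
      exact ⟨fun h => hp (h ▸ hu), huF⟩


/-- for `(θ,τ) = (θ̃,τ̃)`, a solution with an initial function having
zeros exactly at `-θ̃`, `-τ̃` and `0` (with the indicated signs in between)
coincides for `t ≥ 0` with the `θ̃`-periodic function `y0`. -/
theorem stmt_7 (a : ℝ) (ha : 0 < a) (t0 θt τt : ℝ)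
    (ht0 : t0 = (a + 1) / a)
    (hθt : θt = (a + 1) ^ 2 / (a ^ 2 + 3 * a + 1))
    (hτt : τt = a * (a + 1) / (a ^ 2 + 3 * a + 1))
    (φ : ℝ → ℝ) (hφc : ContinuousOn φ (Set.Icc (-1 : ℝ) 0))
    (hφ1 : ∀ t ∈ Set.Ico (-1 : ℝ) (-θt), φ t < 0) (hφθ : φ (-θt) = 0)
    (hφ2 : ∀ t ∈ Set.Ioo (-θt) (-τt), 0 < φ t) (hφτ : φ (-τt) = 0)
    (hφ3 : ∀ t ∈ Set.Ioo (-τt) (0 : ℝ), φ t < 0) (hφ0 : φ 0 = 0)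
    (x : ℝ → ℝ) (hx : IsSolution a φ x)
    (y0 : ℝ → ℝ)
    (hy0per : ∀ t : ℝ, y0 (t + θt) = y0 t)
    (hy0a : ∀ t ∈ Set.Icc (0 : ℝ) (1 - θt), y0 t = t)
    (hy0b : ∀ t ∈ Set.Icc (1 - θt) (1 - τt), y0 t = -a * (t - (1 - θt) * t0))
    (hy0c : ∀ t ∈ Set.Icc (1 - τt) θt, y0 t = t - θt) :
    ∀ t : ℝ, 0 ≤ t → x t = y0 t := by
  obtain ⟨hxc, hxφ, S, hSfin, hxd⟩ := hx
  have hD : (0:ℝ) < a^2 + 3*a + 1 := by nlinarith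
  have hDne : (a^2 + 3*a + 1) ≠ 0 := ne_of_gt hD
  have hane : a ≠ 0 := ne_of_gt ha
  have eθ : θt * (a^2+3*a+1) = (a+1)^2 := by rw [hθt]; field_simp
  have eτ : τt * (a^2+3*a+1) = a*(a+1) := by rw [hτt]; field_simp
  have hθ1 : θt < 1 := by nlinarith
  have hθ0 : 0 < θt := by nlinarith
  have hτ0 : 0 < τt := by nlinarith
  have hτθ : τt < θt := by nlinarith
  have h2θ : 1 - θt < θt - τt := by nlinarith
  have id1 : (1 - θt) * t0 = θt - τt := by rw [ht0, hθt, hτt]; field_simp; ring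
  have id2 : θt + τt - 1 = a * (1 - θt) := by rw [hθt, hτt]; field_simp; ring
  -- natural-number periodicity
  have hper : ∀ (k : ℕ) (u : ℝ), y0 (u + k * θt) = y0 u := by
    intro k
    induction k with
    | zero => intro u; simp
    | succ k ihk =>
      intro u
      have h : u + ((k:ℝ)+1)*θt = (u + k*θt) + θt := by ring
      push_cast
      rw [h, hy0per, ihk]
  -- sign of y0 on one period
  have hy0pos : ∀ u : ℝ, 0 < u → u < θt - τt → 0 < y0 u := by
    intro u h0 h1
    by_cases h : u ≤ 1 - θt
    · rw [hy0a u ⟨h0.le, h⟩]; exact h0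
    · push_neg at h
      have hb := hy0b u ⟨h.le, by nlinarith⟩
      rw [id1] at hb
      rw [hb]; nlinarith
  have hy0np : ∀ u : ℝ, θt - τt ≤ u → u ≤ θt → y0 u ≤ 0 := by
    intro u h0 h1
    by_cases h : u ≤ 1 - τt
    · have hb := hy0b u ⟨by nlinarith, h⟩
      rw [id1] at hb
      rw [hb]; nlinarith
    · push_neg at h
      rw [hy0c u ⟨h.le, h1⟩]; linarith
  have hy0c' : ∀ u : ℝ, 1 - τt ≤ u → u ≤ 1 → y0 u = u - θt := by
    intro u h0 h1
    by_cases h : u ≤ θt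
    · exact hy0c u ⟨h0, h⟩
    · push_neg at h
      have h2 : y0 ((u - θt) + θt) = y0 (u - θt) := hy0per (u - θt)
      have h3 : (u - θt) + θt = u := by ring
      rw [h3] at h2
      rw [h2, hy0a (u - θt) ⟨by linarith, by linarith⟩]
  have hR1 : ∀ v : ℝ, v ≤ 0 → R a v = 1 := fun v hv => if_pos hv
  have hR2 : ∀ v : ℝ, 0 < v → R a v = -a := fun v hv => if_neg (not_le.2 hv)
  -- main induction
  have key : ∀ n : ℕ, ∀ t ∈ Set.Icc (0:ℝ) (1 - θt + n * θt), x t = y0 t := by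
    intro n
    induction n with
    | zero =>
      intro t ht
      simp only [Nat.cast_zero, zero_mul, add_zero] at ht
      have haff := affine_aux 1 (hSfin 0 (1-θt)) x 0 (1-θt) (by linarith)
        (hxc.mono (fun u hu => by simp only [Set.mem_Ici]; have := hu.1; linarith))
        (by
          intro u hu huF
          have hu0 : (0:ℝ) < u := hu.1
          have hd := hxd u hu0 (fun hS' => huF ⟨hS', hu.1.le, hu.2.le⟩)
          have hx1 : x (u - 1) = φ (u - 1) := hxφ (u-1) ⟨by linarith [hu.1], by linarith [hu.2]⟩
          have hneg : φ (u - 1) < 0 := hφ1 (u-1) ⟨by linarith [hu.1], by linarith [hu.2]⟩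
          have : R a (x (u-1)) = 1 := by rw [hx1]; exact hR1 _ hneg.le
          rwa [this] at hd)
      have hx0 : x 0 = 0 := by rw [hxφ 0 ⟨by norm_num, le_rfl⟩, hφ0]
      rw [haff t ht, hx0, hy0a t ht]; ring
    | succ n ih =>
      -- abbreviation: T = 1 - θt + n*θt
      have hTn : (0:ℝ) ≤ (n:ℝ) * θt := mul_nonneg (Nat.cast_nonneg n) hθ0.le
      have hT0 : (0:ℝ) < 1 - θt + n*θt := by linarith
      -- sign of x on (n θt - θt, n θt - τt) and (n θt - τt, n θt)
      have hsgn1 : ∀ s : ℝ, (n:ℝ)*θt - θt < s → s < (n:ℝ)*θt - τt → 0 < x s := by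
        intro s hs1 hs2
        rcases n with _ | m
        · simp only [Nat.cast_zero, zero_mul, zero_sub] at hs1 hs2
          rw [hxφ s ⟨by linarith, by linarith⟩]
          exact hφ2 s ⟨hs1, hs2⟩
        · push_cast at hs1 hs2 ih
          have hm : (0:ℝ) ≤ (m:ℝ) * θt := mul_nonneg (Nat.cast_nonneg m) hθ0.le
          have hs0 : (0:ℝ) < s := by linarith
          have hsle : s ≤ 1 - θt + (m+1)*θt := by linarith
          rw [ih s ⟨hs0.le, hsle⟩]
          have hp := hper m (s - m*θt)
          have h3 : (s - m*θt) + m*θt = s := by ring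
          rw [h3] at hp
          rw [hp]
          exact hy0pos (s - m*θt) (by linarith) (by linarith)
      have hsgn2 : ∀ s : ℝ, (n:ℝ)*θt - τt < s → s < (n:ℝ)*θt → x s ≤ 0 := by
        intro s hs1 hs2
        rcases n with _ | m
        · simp only [Nat.cast_zero, zero_mul, zero_sub] at hs1 hs2
          rw [hxφ s ⟨by linarith, by linarith⟩]
          exact (hφ3 s ⟨hs1, hs2⟩).le
        · push_cast at hs1 hs2 ih
          have hm : (0:ℝ) ≤ (m:ℝ) * θt := mul_nonneg (Nat.cast_nonneg m) hθ0.le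
          have hs0 : (0:ℝ) < s := by linarith
          have hsle : s ≤ 1 - θt + (m+1)*θt := by linarith
          rw [ih s ⟨hs0.le, hsle⟩]
          have hp := hper m (s - m*θt)
          have h3 : (s - m*θt) + m*θt = s := by ring
          rw [h3] at hp
          rw [hp]
          exact hy0np (s - m*θt) (by linarith) (by linarith)
      -- piece 1 : affine with slope -a on [T, T + (θt - τt)]
      have piece1 := affine_aux (-a) (hSfin (1 - θt + n*θt) (1 - θt + n*θt + (θt - τt)))
        x (1 - θt + n*θt) (1 - θt + n*θt + (θt - τt)) (by linarith)
        (hxc.mono (fun u hu => by simp only [Set.mem_Ici]; have := hu.1; linarith))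
        (by
          intro u hu huF
          have hu0 : (0:ℝ) < u := lt_trans hT0 hu.1
          have hd := hxd u hu0 (fun hS' => huF ⟨hS', hu.1.le, hu.2.le⟩)
          have hpos : 0 < x (u - 1) :=
            hsgn1 (u-1) (by linarith [hu.1]) (by linarith [hu.2])
          have : R a (x (u-1)) = -a := hR2 _ hpos
          rwa [this] at hd)
      -- piece 2 : affine with slope 1 on [T + (θt - τt), T + θt]
      have piece2 := affine_aux 1 (hSfin (1 - θt + n*θt + (θt - τt)) (1 - θt + n*θt + θt))
        x (1 - θt + n*θt + (θt - τt)) (1 - θt + n*θt + θt) (by linarith)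
        (hxc.mono (fun u hu => by simp only [Set.mem_Ici]; have := hu.1; linarith))
        (by
          intro u hu huF
          have hu0 : (0:ℝ) < u := by have := hu.1; linarith
          have hd := hxd u hu0 (fun hS' => huF ⟨hS', hu.1.le, hu.2.le⟩)
          have hneg : x (u - 1) ≤ 0 :=
            hsgn2 (u-1) (by linarith [hu.1]) (by linarith [hu.2])
          have : R a (x (u-1)) = 1 := hR1 _ hneg
          rwa [this] at hd)
      intro t ht
      push_cast at ht
      by_cases htT : t ≤ 1 - θt + n*θt
      · exact ih t ⟨ht.1, htT⟩
      · push_neg at htT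
        -- value at T
        have hxT : x (1 - θt + n*θt) = y0 (1 - θt + n*θt) :=
          ih (1 - θt + n*θt) ⟨hT0.le, le_rfl⟩
        have hy0T : y0 (1 - θt + n*θt) = -a * ((1-θt) - (θt - τt)) := by
          have hp := hper n (1-θt)
          have h3 : (1-θt) + n*θt = 1 - θt + n*θt := by ring
          rw [h3] at hp
          rw [hp, hy0b (1-θt) ⟨le_rfl, by linarith⟩, id1]
        by_cases h2 : t ≤ 1 - θt + n*θt + (θt - τt)
        · have hp1 := piece1 t ⟨htT.le, h2⟩
          have hp := hper n (t - n*θt)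
          have h3 : (t - n*θt) + n*θt = t := by ring
          rw [h3] at hp
          have hyb := hy0b (t - n*θt) ⟨by linarith, by linarith⟩
          rw [id1] at hyb
          rw [hp1, hxT, hy0T, hp, hyb]; ring
        · push_neg at h2
          have hxm := piece1 (1 - θt + n*θt + (θt - τt)) ⟨by linarith, le_rfl⟩
          have hp2 := piece2 t ⟨h2.le, by linarith [ht.2]⟩
          have hp := hper n (t - n*θt)
          have h3 : (t - n*θt) + n*θt = t := by ring
          rw [h3] at hp
          have hyc := hy0c' (t - n*θt) (by linarith) (by linarith [ht.2])
          rw [hp2, hxm, hxT, hy0T, hp, hyc]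
          linarith [id2]
  intro t ht
  obtain ⟨n, hn⟩ := exists_nat_ge (t / θt)
  have htn : t ≤ n * θt := by
    rw [div_le_iff₀ hθ0] at hn
    linarith
  exact key n t ⟨ht, by linarith⟩
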